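/- Let a, b be positive real numbers. Then the function p ↦ M_p(a,b) is monotone increasing on (0,∞) and the function p ↦ log M_p(a,b) is concave on (0,∞); equivalently, for all p, q > 0, M_{(p+q)/2}(a,b)^2 ≥ M_p(a,b) · M_q(a,b). -/

import Mathlib

noncomputable section

open Real

/-- Logarithmic mean: `L(x,y) = (x - y)/(log x - log y)` for `x ≠ y`, `L(x,x) = x`. -/
def logMean (x y : ℝ) : ℝ := if x = y then x else (x - y) / (Real.log x - Real.log y)

/-- Identric mean: `I(x,y) = (1/e) * (x^x / y^y)^(1/(x-y))` for `x ≠ y`, `I(x,x) = x`. -/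
def identricMean (x y : ℝ) : ℝ :=
  if x = y then x else (1 / Real.exp 1) * (x ^ x / y ^ y) ^ (1 / (x - y))

/-- Power mean of order `t`: `M_t(a,b) = ((a^t + b^t)/2)^(1/t)` for `t ≠ 0`, `M_0(a,b) = √(ab)`. -/
def powerMean (t a b : ℝ) : ℝ :=
  if t = 0 then Real.sqrt (a * b) else ((a ^ t + b ^ t) / 2) ^ (1 / t)

/-- Lehmer mean of order `p`: `L_p(a,b) = (a^p + b^p)/(a^(p-1) + b^(p-1))`. -/
def lehmerMean (p a b : ℝ) : ℝ := (a ^ p + b ^ p) / (a ^ (p - 1) + b ^ (p - 1))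

/-- Weighted power mean: `M_p(ω,a,b) = ((a^p + ω b^p)/(1 + ω))^(1/p)`. -/
def wPowerMean (p ω a b : ℝ) : ℝ := ((a ^ p + ω * b ^ p) / (1 + ω)) ^ (1 / p)

/-- Modified Alzer mean: `J_p(a,b) = ((p+1)/p) * (a^(p+1) - b^(p+1))/(a^p - b^p)`. -/
def alzerMean (p a b : ℝ) : ℝ :=
  ((p + 1) / p) * ((a ^ (p + 1) - b ^ (p + 1)) / (a ^ p - b ^ p))


namespace PMaux

variable (a b : ℝ)

def s (p : ℝ) : ℝ := a ^ p + b ^ p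
def nn (p : ℝ) : ℝ := a ^ p * log a + b ^ p * log b
def n2 (p : ℝ) : ℝ := a ^ p * (log a) ^ 2 + b ^ p * (log b) ^ 2
def n3 (p : ℝ) : ℝ := a ^ p * (log a) ^ 3 + b ^ p * (log b) ^ 3
def f (p : ℝ) : ℝ := Real.log (s a b p / 2)
def f1 (p : ℝ) : ℝ := nn a b p / s a b p
def f2 (p : ℝ) : ℝ := (n2 a b p * s a b p - (nn a b p) ^ 2) / (s a b p) ^ 2
def f3 (p : ℝ) : ℝ :=
  (n3 a b p * (s a b p) ^ 2 - 3 * nn a b p * n2 a b p * s a b p + 2 * (nn a b p) ^ 3)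
    / (s a b p) ^ 3
def H (p : ℝ) : ℝ := f a b p / p
def H1 (p : ℝ) : ℝ := (f1 a b p * p - f a b p) / p ^ 2
def K (p : ℝ) : ℝ := p ^ 2 * f2 a b p - 2 * p * f1 a b p + 2 * f a b p
def phi (p : ℝ) : ℝ := f1 a b p * p - f a b p

variable {a b} (ha : 0 < a) (hb : 0 < b)
include ha hb

lemma s_pos (p : ℝ) : 0 < s a b p :=
  add_pos (rpow_pos_of_pos ha p) (rpow_pos_of_pos hb p)

lemma hasDerivAt_s (p : ℝ) : HasDerivAt (s a b) (nn a b p) p :=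
  ((hasStrictDerivAt_const_rpow ha p).hasDerivAt).add
    ((hasStrictDerivAt_const_rpow hb p).hasDerivAt)

lemma hasDerivAt_nn (p : ℝ) : HasDerivAt (nn a b) (n2 a b p) p := by
  have := (((hasStrictDerivAt_const_rpow ha p).hasDerivAt).mul_const (log a)).add
    (((hasStrictDerivAt_const_rpow hb p).hasDerivAt).mul_const (log b))
  refine this.congr_deriv (Eq.symm ?_)
  simp [n2]; ring

lemma hasDerivAt_n2 (p : ℝ) : HasDerivAt (n2 a b) (n3 a b p) p := by
  have := (((hasStrictDerivAt_const_rpow ha p).hasDerivAt).mul_const ((log a) ^ 2)).add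
    (((hasStrictDerivAt_const_rpow hb p).hasDerivAt).mul_const ((log b) ^ 2))
  refine this.congr_deriv (Eq.symm ?_)
  simp [n3]; ring

lemma hasDerivAt_f (p : ℝ) : HasDerivAt (f a b) (f1 a b p) p := by
  have hs := s_pos ha hb p
  have := (((hasDerivAt_s ha hb p).div_const 2).log (by positivity))
  refine this.congr_deriv (Eq.symm ?_)
  rw [f1]
  field_simp

lemma hasDerivAt_f1 (p : ℝ) : HasDerivAt (f1 a b) (f2 a b p) p := by
  have hs := s_pos ha hb p
  have := ((hasDerivAt_nn ha hb p).div (hasDerivAt_s ha hb p) hs.ne')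
  refine this.congr_deriv (Eq.symm ?_)
  rw [f2]; ring

lemma hasDerivAt_f2 (p : ℝ) : HasDerivAt (f2 a b) (f3 a b p) p := by
  have hs := s_pos ha hb p
  have hnum : HasDerivAt (fun q => n2 a b q * s a b q - (nn a b q) ^ 2)
      (n3 a b p * s a b p + n2 a b p * nn a b p - 2 * nn a b p * n2 a b p) p := by
    have h1 := (hasDerivAt_n2 ha hb p).mul (hasDerivAt_s ha hb p)
    have h2 := (hasDerivAt_nn ha hb p).pow 2
    refine (h1.sub h2).congr_deriv (Eq.symm ?_)
    push_cast; ring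
  have hden : HasDerivAt (fun q => (s a b q) ^ 2) (2 * (s a b p) * nn a b p) p := by
    have := (hasDerivAt_s ha hb p).pow 2
    refine this.congr_deriv (Eq.symm ?_)
    push_cast; ring
  have := hnum.div hden (by positivity)
  refine this.congr_deriv (Eq.symm ?_)
  rw [f3]
  field_simp
  ring

lemma hasDerivAt_K (p : ℝ) : HasDerivAt (K a b) (p ^ 2 * f3 a b p) p := by
  have h1 : HasDerivAt (fun q : ℝ => q ^ 2 * f2 a b q)
      (2 * p * f2 a b p + p ^ 2 * f3 a b p) p := by
    have := ((hasDerivAt_pow 2 p)).mul (hasDerivAt_f2 ha hb p)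
    refine this.congr_deriv (Eq.symm ?_)
    push_cast; ring
  have h2 : HasDerivAt (fun q : ℝ => 2 * q * f1 a b q)
      (2 * f1 a b p + 2 * p * f2 a b p) p := by
    have := (((hasDerivAt_id p).const_mul (2:ℝ)).mul (hasDerivAt_f1 ha hb p))
    refine this.congr_deriv (Eq.symm ?_)
    simp only [id_eq]; ring
  have h3 : HasDerivAt (fun q : ℝ => 2 * f a b q) (2 * f1 a b p) p :=
    (hasDerivAt_f ha hb p).const_mul 2
  have := (h1.sub h2).add h3
  refine this.congr_deriv (Eq.symm ?_)
  ring

lemma hasDerivAt_phi (p : ℝ) : HasDerivAt (phi a b) (p * f2 a b p) p := by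
  have h1 : HasDerivAt (fun q : ℝ => f1 a b q * q) (f2 a b p * p + f1 a b p) p := by
    have := (hasDerivAt_f1 ha hb p).mul (hasDerivAt_id p)
    refine this.congr_deriv (Eq.symm ?_)
    simp
  have := h1.sub (hasDerivAt_f ha hb p)
  refine this.congr_deriv (Eq.symm ?_)
  ring

omit ha hb in
lemma f2_key (p : ℝ) :
    n2 a b p * s a b p - (nn a b p) ^ 2 = a ^ p * b ^ p * (log a - log b) ^ 2 := by
  simp only [n2, s, nn]; ring

omit ha hb in
lemma f3_key (p : ℝ) :
    n3 a b p * (s a b p) ^ 2 - 3 * nn a b p * n2 a b p * s a b p + 2 * (nn a b p) ^ 3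
      = a ^ p * b ^ p * (log a - log b) ^ 3 * (b ^ p - a ^ p) := by
  simp only [n3, n2, s, nn]; ring

lemma f2_nonneg (p : ℝ) : 0 ≤ f2 a b p := by
  rw [f2, f2_key]
  have := s_pos ha hb p
  positivity

lemma f3_nonpos {p : ℝ} (hp : 0 ≤ p) : f3 a b p ≤ 0 := by
  rw [f3, f3_key]
  have hs := s_pos ha hb p
  have hap := rpow_pos_of_pos ha p
  have hbp := rpow_pos_of_pos hb p
  have key : (log a - log b) ^ 3 * (b ^ p - a ^ p) ≤ 0 := by
    rcases le_total a b with hab | hab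
    · have hl : log a ≤ log b := Real.log_le_log ha hab
      have hr : a ^ p ≤ b ^ p := Real.rpow_le_rpow ha.le hab hp
      have h3 : (log a - log b) ^ 3 ≤ 0 := by
        have h0 : log a - log b ≤ 0 := by linarith
        exact Odd.pow_nonpos (by decide) h0
      nlinarith
    · have hl : log b ≤ log a := Real.log_le_log hb hab
      have hr : b ^ p ≤ a ^ p := Real.rpow_le_rpow hb.le hab hp
      have h0 : 0 ≤ log a - log b := by linarith
      have h3 : 0 ≤ (log a - log b) ^ 3 := by positivity
      nlinarith
  apply div_nonpos_of_nonpos_of_nonneg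
  · have heq : a ^ p * b ^ p * (log a - log b) ^ 3 * (b ^ p - a ^ p)
        = (a ^ p * b ^ p) * ((log a - log b) ^ 3 * (b ^ p - a ^ p)) := by ring
    rw [heq]
    exact mul_nonpos_of_nonneg_of_nonpos (by positivity) key
  · positivity

omit ha hb in
lemma f_zero : f a b 0 = 0 := by
  simp [f, s]

omit ha hb in
lemma K_zero : K a b 0 = 0 := by
  simp [K, f_zero]

omit ha hb in
lemma phi_zero : phi a b 0 = 0 := by
  simp [phi, f_zero]

lemma K_nonpos {p : ℝ} (hp : 0 ≤ p) : K a b p ≤ 0 := by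
  have hanti : AntitoneOn (K a b) (Set.Ici 0) := by
    apply antitoneOn_of_hasDerivWithinAt_nonpos (convex_Ici 0)
      (f' := fun q => q ^ 2 * f3 a b q)
    · exact fun q _ => (hasDerivAt_K ha hb q).continuousAt.continuousWithinAt
    · exact fun q _ => (hasDerivAt_K ha hb q).hasDerivWithinAt
    · intro q hq
      rw [interior_Ici] at hq
      have := f3_nonpos ha hb (le_of_lt hq)
      nlinarith
  calc K a b p ≤ K a b 0 := hanti (Set.mem_Ici.mpr le_rfl) (Set.mem_Ici.mpr hp) hp
  _ = 0 := K_zero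

lemma phi_nonneg {p : ℝ} (hp : 0 ≤ p) : 0 ≤ phi a b p := by
  have hmono : MonotoneOn (phi a b) (Set.Ici 0) := by
    apply monotoneOn_of_hasDerivWithinAt_nonneg (convex_Ici 0)
      (f' := fun q => q * f2 a b q)
    · exact fun q _ => (hasDerivAt_phi ha hb q).continuousAt.continuousWithinAt
    · exact fun q _ => (hasDerivAt_phi ha hb q).hasDerivWithinAt
    · intro q hq
      rw [interior_Ici] at hq
      exact mul_nonneg hq.le (f2_nonneg ha hb q)
  calc (0:ℝ) = phi a b 0 := phi_zero.symm
  _ ≤ phi a b p := hmono (Set.mem_Ici.mpr le_rfl) (Set.mem_Ici.mpr hp) hp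

lemma hasDerivAt_H {p : ℝ} (hp : p ≠ 0) : HasDerivAt (H a b) (H1 a b p) p := by
  have := (hasDerivAt_f ha hb p).div (hasDerivAt_id p) hp
  refine this.congr_deriv (Eq.symm ?_)
  rw [H1]
  simp

lemma hasDerivAt_H1 {p : ℝ} (hp : p ≠ 0) :
    HasDerivAt (H1 a b) (K a b p / p ^ 3) p := by
  have hnum : HasDerivAt (fun q => f1 a b q * q - f a b q) (f2 a b p * p) p := by
    have h1 := (hasDerivAt_f1 ha hb p).mul (hasDerivAt_id p)
    have := h1.sub (hasDerivAt_f ha hb p)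
    refine this.congr_deriv (Eq.symm ?_)
    simp [f1]
  have hden : HasDerivAt (fun q : ℝ => q ^ 2) (2 * p) p := by
    simpa using hasDerivAt_pow 2 p
  have := hnum.div hden (by positivity)
  refine this.congr_deriv (Eq.symm ?_)
  rw [K]
  field_simp
  ring



lemma H1_nonneg {p : ℝ} (hp : 0 < p) : 0 ≤ H1 a b p := by
  rw [H1]
  exact div_nonneg (phi_nonneg ha hb hp.le) (by positivity)

lemma antitoneOn_H1 : AntitoneOn (H1 a b) (Set.Ioi 0) := by
  apply antitoneOn_of_hasDerivWithinAt_nonpos (convex_Ioi 0)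
    (f' := fun q => K a b q / q ^ 3)
  · exact fun q hq => (hasDerivAt_H1 ha hb (ne_of_gt hq)).continuousAt.continuousWithinAt
  · intro q hq
    rw [interior_Ioi] at hq
    exact (hasDerivAt_H1 ha hb (ne_of_gt hq)).hasDerivWithinAt
  · intro q hq
    rw [interior_Ioi] at hq
    exact div_nonpos_of_nonpos_of_nonneg (K_nonpos ha hb hq.le) (pow_pos (Set.mem_Ioi.mp hq) 3).le

lemma monotoneOn_H : MonotoneOn (H a b) (Set.Ioi 0) := by
  apply monotoneOn_of_hasDerivWithinAt_nonneg (convex_Ioi 0) (f' := H1 a b)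
  · exact fun q hq => (hasDerivAt_H ha hb (ne_of_gt hq)).continuousAt.continuousWithinAt
  · intro q hq
    rw [interior_Ioi] at hq
    exact (hasDerivAt_H ha hb (ne_of_gt hq)).hasDerivWithinAt
  · intro q hq
    rw [interior_Ioi] at hq
    exact H1_nonneg ha hb hq

lemma concaveOn_H : ConcaveOn ℝ (Set.Ioi 0) (H a b) := by
  apply AntitoneOn.concaveOn_of_deriv (convex_Ioi 0)
  · exact fun q hq => (hasDerivAt_H ha hb (ne_of_gt hq)).continuousAt.continuousWithinAt
  · rw [interior_Ioi]
    exact fun q hq =>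
      (hasDerivAt_H ha hb (ne_of_gt hq)).differentiableAt.differentiableWithinAt
  · rw [interior_Ioi]
    intro x hx y hy hxy
    rw [(hasDerivAt_H ha hb (ne_of_gt (Set.mem_Ioi.mp hx))).deriv,
      (hasDerivAt_H ha hb (ne_of_gt (Set.mem_Ioi.mp hy))).deriv]
    exact antitoneOn_H1 ha hb hx hy hxy

end PMaux

theorem powerMean_monotone_logConcave_pos (a b : ℝ) (ha : 0 < a) (hb : 0 < b) :
    MonotoneOn (fun p => powerMean p a b) (Set.Ioi (0 : ℝ)) ∧
    ConcaveOn ℝ (Set.Ioi (0 : ℝ)) (fun p => Real.log (powerMean p a b)) ∧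
    ∀ p q : ℝ, 0 < p → 0 < q →
      powerMean p a b * powerMean q a b ≤ powerMean ((p + q) / 2) a b ^ 2 := by
  have key : ∀ p : ℝ, p ∈ Set.Ioi (0:ℝ) → Real.log (powerMean p a b) = PMaux.H a b p := by
    intro p hp
    have hp' : 0 < p := hp
    have hbase : (0:ℝ) < (a ^ p + b ^ p) / 2 := by positivity
    rw [powerMean, if_neg hp'.ne', Real.log_rpow hbase]
    simp only [PMaux.H, PMaux.f, PMaux.s]
    ring
  have hpos : ∀ p : ℝ, 0 < powerMean p a b := by
    intro p
    rw [powerMean]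
    split_ifs with h
    · positivity
    · positivity
  have hmonoH := PMaux.monotoneOn_H ha hb
  have hconcH := PMaux.concaveOn_H ha hb
  have hconc : ConcaveOn ℝ (Set.Ioi (0:ℝ)) (fun p => Real.log (powerMean p a b)) := by
    refine ⟨convex_Ioi 0, ?_⟩
    intro x hx y hy α β hα hβ hαβ
    have hxy : α • x + β • y ∈ Set.Ioi (0:ℝ) := (convex_Ioi 0) hx hy hα hβ hαβ
    simp only
    rw [key _ hxy, key _ hx, key _ hy]
    exact hconcH.2 hx hy hα hβ hαβ
  refine ⟨?_, hconc, ?_⟩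
  · intro x hx y hy hxy
    simp only
    calc powerMean x a b = Real.exp (PMaux.H a b x) := by
          rw [← key x hx, Real.exp_log (hpos x)]
      _ ≤ Real.exp (PMaux.H a b y) := Real.exp_le_exp.mpr (hmonoH hx hy hxy)
      _ = powerMean y a b := by rw [← key y hy, Real.exp_log (hpos y)]
  · intro p q hp hq
    have hm : (0:ℝ) < (p + q) / 2 := by linarith
    have h2 := hconc.2 (Set.mem_Ioi.mpr hp) (Set.mem_Ioi.mpr hq)
      (by norm_num : (0:ℝ) ≤ 1/2) (by norm_num : (0:ℝ) ≤ 1/2) (by norm_num)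
    simp only [smul_eq_mul] at h2
    have heq : (1/2:ℝ) * p + (1/2:ℝ) * q = (p + q) / 2 := by ring
    rw [heq] at h2
    have h3 : Real.exp ((Real.log (powerMean p a b) + Real.log (powerMean q a b)) / 2)
        ≤ powerMean ((p + q) / 2) a b := by
      calc Real.exp ((Real.log (powerMean p a b) + Real.log (powerMean q a b)) / 2)
          ≤ Real.exp (Real.log (powerMean ((p+q)/2) a b)) := by
            apply Real.exp_le_exp.mpr
            linarith
        _ = powerMean ((p+q)/2) a b := Real.exp_log (hpos _)
    calc powerMean p a b * powerMean q a b
        = Real.exp ((Real.log (powerMean p a b) + Real.log (powerMean q a b)) / 2) ^ 2 := by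
          rw [sq, ← Real.exp_add]
          have : (Real.log (powerMean p a b) + Real.log (powerMean q a b)) / 2
              + (Real.log (powerMean p a b) + Real.log (powerMean q a b)) / 2
              = Real.log (powerMean p a b) + Real.log (powerMean q a b) := by ring
          rw [this, Real.exp_add, Real.exp_log (hpos p), Real.exp_log (hpos q)]
      _ ≤ powerMean ((p + q) / 2) a b ^ 2 :=
          pow_le_pow_left₀ (Real.exp_nonneg _) h3 2

end
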